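/- Let $\mathcal{D}$ be a Cartan datum of type $A_n$ over a finite abelian group $\Gamma$ with elements $g_i$ and characters $\chi_i$, and let $\mu = (\mu_{ij})$ be a family of root vector parameters (i.e. $\mu_{ij} = 0$ whenever $g_{ij}^N = 1$ and whenever $\chi_{ij}^N \neq 1$, where $g_{ij} = g_i \cdots g_{j-1}$, $\chi_{ij} = \chi_i \cdots \chi_{j-1}$). For a chain $(l_1,\dots,l_m) \in I_{ij}$ and any subchain indexed by $(k_1,\dots,k_r) \in I_{1m}$, one has $\mu(l_1,\dots,l_m)\, \tau_{ij} = \mu(l_1,\dots,l_m)\, \tau(l_{k_1}, l_{k_2}, \dots, l_{k_r})$, where $\mu(l_1,\dots,l_m) = \mu_{l_1 l_2} \cdots \mu_{l_{m-1} l_m}$, $\tau_{ab} = \prod_{a < l < b} \chi_{al}^N(g_l)$, and $\tau(a_1,\dots,a_s) = \tau_{a_1 a_2} \cdots \tau_{a_{s-1} a_s}$. -/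

import Mathlib

/-- A chain `(l_1, …, l_m) ∈ I_{ij}` is encoded by the finite set `S ⊆ (i, j)` of its
interior entries; a subchain `(l_{k_1}, …, l_{k_r})`, `(k_1,…,k_r) ∈ I_{1m}`, is then
encoded by a subset `T ⊆ S`. -/
def chainList (i j : ℕ) (S : Finset ℕ) : List ℕ := i :: (S.sort (· ≤ ·) ++ [j])

/-- `pairProd f [a_1, …, a_r] = f a_1 a_2 * f a_2 a_3 * ⋯ * f a_{r-1} a_r`. -/
def pairProd {M : Type*} [Monoid M] (f : ℕ → ℕ → M) : List ℕ → M
  | [] => 1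
  | [_] => 1
  | a :: b :: t => f a b * pairProd f (b :: t)

/-- `τ_{ab} = ∏_{a < l < b} χ_{al}^N(g_l)`, where `χ_{al} = χ_a χ_{a+1} ⋯ χ_{l-1}`. -/
def tauG {k : Type*} [Field k] {Γ : Type*} [CommGroup Γ]
    (g : ℕ → Γ) (χ : ℕ → Γ →* kˣ) (N a b : ℕ) : k :=
  ∏ l ∈ Finset.Ioo a b, (∏ t ∈ Finset.Ico a l, ((χ t) (g l) : k)) ^ N

private lemma chain'_and' {p q : ℕ → ℕ → Prop} : ∀ {l : List ℕ}, List.Chain' p l →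
    List.Chain' q l → List.Chain' (fun a b => p a b ∧ q a b) l
  | [], _, _ => List.isChain_nil
  | [a], _, _ => List.isChain_singleton a
  | _ :: _ :: _, hp, hq => by
      simp only [List.Chain', List.isChain_cons_cons] at hp hq ⊢
      exact ⟨⟨hp.1, hq.1⟩, chain'_and' hp.2 hq.2⟩

private lemma chain'_mono_mem' {p q : ℕ → ℕ → Prop} : ∀ {l : List ℕ}, List.Chain' p l →
    (∀ a ∈ l, ∀ b ∈ l, p a b → q a b) → List.Chain' q l
  | [], _, _ => List.isChain_nil
  | [a], _, _ => List.isChain_singleton a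
  | a :: b :: t, hp, h => by
      simp only [List.Chain', List.isChain_cons_cons] at hp ⊢
      refine ⟨h a (by simp) b (by simp) hp.1, chain'_mono_mem' hp.2 ?_⟩
      exact fun x hx y hy => h x (List.mem_cons_of_mem _ hx) y (List.mem_cons_of_mem _ hy)

private lemma pairProd_ne_zero_chain {k : Type*} [Field k] (μ : ℕ → ℕ → k) :
    ∀ l : List ℕ, pairProd μ l ≠ 0 → List.Chain' (fun a b => μ a b ≠ 0) l
  | [], _ => List.isChain_nil
  | [a], _ => List.isChain_singleton a
  | a :: b :: t, h => by
      rw [pairProd] at h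
      simp only [List.Chain', List.isChain_cons_cons]
      exact ⟨left_ne_zero_of_mul h,
        pairProd_ne_zero_chain μ (b :: t) (right_ne_zero_of_mul h)⟩

private lemma tau_split {k : Type*} [Field k] {Γ : Type*} [CommGroup Γ]
    (g : ℕ → Γ) (χ : ℕ → Γ →* kˣ) (N : ℕ)
    {a c b : ℕ} (hac : a < c) (hcb : c < b)
    (hcond : (∏ t ∈ Finset.Ico a c, χ t) ^ N = 1) :
    tauG g χ N a b = tauG g χ N a c * tauG g χ N c b := by
  have hk : ∀ γ : Γ, (∏ t ∈ Finset.Ico a c, ((χ t) γ : k)) ^ N = 1 := by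
    intro γ
    have h1 := congrArg (fun f : Γ →* kˣ => f γ) hcond
    simp only [MonoidHom.pow_apply, MonoidHom.one_apply, MonoidHom.finset_prod_apply] at h1
    have := congrArg (Units.val : kˣ → k) h1
    push_cast at this
    simpa using this
  unfold tauG
  have e1 : Finset.Ioo a b = Finset.Ioo a c ∪ Finset.Ico c b := by
    ext x; simp only [Finset.mem_Ioo, Finset.mem_union, Finset.mem_Ico]; omega
  have hdisj : Disjoint (Finset.Ioo a c) (Finset.Ico c b) := by
    rw [Finset.disjoint_left]
    intro x hx hx'
    simp only [Finset.mem_Ioo, Finset.mem_Ico] at hx hx'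
    omega
  rw [e1, Finset.prod_union hdisj]
  congr 1
  rw [Finset.prod_eq_prod_Ico_succ_bot hcb, hk (g c), one_mul, Finset.Ico_add_one_left_eq_Ioo]
  apply Finset.prod_congr rfl
  intro l hl
  rw [Finset.mem_Ioo] at hl
  rw [← Finset.prod_Ico_consecutive (fun t => ((χ t) (g l) : k)) hac.le hl.1.le,
    mul_pow, hk (g l), one_mul]

private lemma tau_chain {k : Type*} [Field k] {Γ : Type*} [CommGroup Γ]
    (g : ℕ → Γ) (χ : ℕ → Γ →* kˣ) (N : ℕ) :
    ∀ (l : List ℕ) (a b : ℕ),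
      List.Pairwise (fun x y => x < y ∧ (∏ t ∈ Finset.Ico x y, χ t) ^ N = 1)
        (a :: (l ++ [b])) →
      pairProd (tauG g χ N) (a :: (l ++ [b])) = tauG g χ N a b
  | [], a, b, _ => by simp [pairProd]
  | c :: l, a, b, h => by
      rw [List.pairwise_cons] at h
      have hac := h.1 c (by simp)
      have hcb := (List.pairwise_cons.mp h.2).1 b (by simp)
      have ih := tau_chain g χ N l c b h.2
      show tauG g χ N a c * pairProd (tauG g χ N) (c :: (l ++ [b])) = _
      rw [ih, ← tau_split g χ N hac.1 hcb.1 hac.2]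

/-- Let `𝒟` be a Cartan datum of type `A_n` over a finite abelian
group `Γ` and `μ` a family of root vector parameters (conditions (R1) and (R2)).
For every chain `(l_1,…,l_m) ∈ I_{ij}` and every subchain `(l_{k_1},…,l_{k_r})`,
`μ(l_1,…,l_m) τ_{ij} = μ(l_1,…,l_m) τ(l_{k_1},…,l_{k_r})`. -/
theorem stmt_11 {k : Type*} [Field k] {Γ : Type*} [CommGroup Γ] [Fintype Γ]
    (n N : ℕ) (hn : 2 ≤ n) (hNodd : Odd N) (hN1 : 1 < N)
    (q : k) (hq : IsPrimitiveRoot q N)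
    (g : ℕ → Γ) (χ : ℕ → Γ →* kˣ)
    (hdiag : ∀ l, 1 ≤ l → l ≤ n → ((χ l) (g l) : k) = q)
    (hC1 : ∀ a b, 1 ≤ a → a ≤ n → 1 ≤ b → b ≤ n → (a + 1 = b ∨ b + 1 = a) →
      ((χ b) (g a) : k) * ((χ a) (g b) : k) = q⁻¹)
    (hC2 : ∀ a b, 1 ≤ a → a ≤ n → 1 ≤ b → b ≤ n → (a + 2 ≤ b ∨ b + 2 ≤ a) →
      ((χ b) (g a) : k) * ((χ a) (g b) : k) = 1)
    (μ : ℕ → ℕ → k)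
    (hR1 : ∀ a b, 1 ≤ a → a < b → b ≤ n + 1 →
      (∏ t ∈ Finset.Ico a b, g t) ^ N = 1 → μ a b = 0)
    (hR2 : ∀ a b, 1 ≤ a → a < b → b ≤ n + 1 →
      (∏ t ∈ Finset.Ico a b, χ t) ^ N ≠ 1 → μ a b = 0)
    (i j : ℕ) (hi : 1 ≤ i) (hij : i < j) (hj : j ≤ n + 1)
    (S : Finset ℕ) (hS : S ⊆ Finset.Ioo i j) (T : Finset ℕ) (hT : T ⊆ S) :
    pairProd μ (chainList i j S) * tauG g χ N i j
      = pairProd μ (chainList i j S) * pairProd (tauG g χ N) (chainList i j T) := by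
  classical
  by_cases hμ : pairProd μ (chainList i j S) = 0
  · rw [hμ, zero_mul, zero_mul]
  set r : ℕ → ℕ → Prop :=
    fun a b => a < b ∧ (∏ t ∈ Finset.Ico a b, χ t) ^ N = 1 with hr
  -- bounds for members of the chain
  have hmem : ∀ x ∈ chainList i j S, i ≤ x ∧ x ≤ j := by
    intro x hx
    simp only [chainList, List.mem_cons, List.mem_append, List.mem_singleton,
      List.not_mem_nil, or_false, Finset.mem_sort] at hx
    rcases hx with rfl | hx | rfl
    · omega
    · have := hS hx; rw [Finset.mem_Ioo] at this; omega
    · omega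
  -- the chain is strictly sorted
  have hsort : List.Chain' (· < ·) (chainList i j S) := by
    apply List.Pairwise.isChain
    unfold chainList
    rw [List.pairwise_cons]
    constructor
    · intro x hx
      rcases List.mem_append.mp hx with hx | hx
      · exact ((Finset.mem_Ioo.mp (hS ((Finset.mem_sort _).mp hx))).1)
      · rw [List.mem_singleton] at hx; omega
    · rw [List.pairwise_append]
      refine ⟨List.sortedLT_iff_pairwise.mp (Finset.sortedLT_sort S), List.pairwise_singleton _ _, ?_⟩
      intro x hx y hy
      rw [List.mem_singleton] at hy
      subst hy
      exact (Finset.mem_Ioo.mp (hS ((Finset.mem_sort _).mp hx))).2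
  have hchainμ := pairProd_ne_zero_chain μ _ hμ
  have hchain : List.Chain' r (chainList i j S) := by
    apply chain'_mono_mem' (chain'_and' hsort hchainμ)
    rintro a ha b hb ⟨hab, hμab⟩
    refine ⟨hab, ?_⟩
    by_contra hne
    exact hμab (hR2 a b (le_trans hi (hmem a ha).1) hab (le_trans (hmem b hb).2 hj) hne)
  haveI : IsTrans ℕ r := by
    constructor
    rintro a b c ⟨hab, h1⟩ ⟨hbc, h2⟩
    refine ⟨hab.trans hbc, ?_⟩
    rw [← Finset.prod_Ico_consecutive χ hab.le hbc.le, mul_pow, h1, h2]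
    ext x
    simp
  have hpair : List.Pairwise r (chainList i j S) := List.isChain_iff_pairwise.mp hchain
  have hsub : List.Sublist (chainList i j T) (chainList i j S) := by
    unfold chainList
    refine List.Sublist.cons₂ _ (List.Sublist.append_right ?_ _)
    refine List.sublist_of_subperm_of_pairwise ?_ (T.pairwise_sort _) (S.pairwise_sort _)
    exact List.Nodup.subperm (T.sort_nodup _) (fun x hx =>
      (Finset.mem_sort _).mpr (hT ((Finset.mem_sort _).mp hx)))
  have hpairT := hpair.sublist hsub
  rw [show pairProd (tauG g χ N) (chainList i j T) = tauG g χ N i j from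
    tau_chain g χ N (T.sort (· ≤ ·)) i j hpairT]
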